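/- Let X, Y be Banach spaces, Ω ⊆ X open, h : Ω → Y Fréchet differentiable, H : X ⇉ Y a set-valued mapping, A₀ : X → Y a bounded linear mapping, a₀ ∈ Y, G : X ⇉ Y a set-valued mapping, and x̄ ∈ X with 0 ∈ A₀x̄ + a₀ + G(x̄). Assume the mapping x ↦ A₀x + a₀ + G(x) is strongly regular at x̄ for 0 with Lipschitz constant λ > 0. Then there exist r_{x̄} > 0, r_{A₀} > 0, r_{a₀} > 0 and r₀ > 0 such that for every bounded linear A : X → Y with ‖A − A₀‖ < r_{A₀} and every a ∈ Y with ‖a − a₀‖ < r_{a₀}: (a) λ‖A − A₀‖ < 1; (b) for each y with ‖y‖ < r₀ the set {x ∈ X : y ∈ Ax + a + G(x)} ∩ B(x̄, r_{x̄}) is a singleton {σ(y)} with σ(y) ∈ B(x̄, r_{x̄}); and (c) ‖σ(y₁) − σ(y₂)‖ ≤ (λ/(1 − λ‖A − A₀‖))‖y₁ − y₂‖ for all y₁, y₂ ∈ B(0, r₀). -/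

import Mathlib

open Metric Set Filter

set_option maxHeartbeats 1600000

/-- Banach perturbation lemma for strongly regular generalized equations
(Lemma 2.4 / `lem:blr`): if `x ↦ A₀ x + a₀ + G x` is strongly regular at `x̄` for `0`
with Lipschitz constant `lam`, then for all `A` near `A₀` and `a` near `a₀` the
perturbed mapping `y ↦ {x | y ∈ A x + a + G x}` is single-valued and Lipschitz near `0`. -/
theorem stmt0
    {X Y : Type*} [NormedAddCommGroup X] [NormedSpace ℝ X] [CompleteSpace X]
    [NormedAddCommGroup Y] [NormedSpace ℝ Y] [CompleteSpace Y]
    (A₀ : X →L[ℝ] Y) (a₀ : Y) (G : X → Set Y) (xbar : X)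
    (lam : ℝ) (hlam : 0 < lam)
    (hsol : -(A₀ xbar + a₀) ∈ G xbar)
    (hsr : ∃ rx > (0:ℝ), ∃ ry > (0:ℝ), ∃ s : Y → X,
      (∀ z ∈ ball (0:Y) ry,
        ({y : X | z - (A₀ y + a₀) ∈ G y} ∩ ball xbar rx) = {s z} ∧ s z ∈ ball xbar rx) ∧
      (∀ u ∈ ball (0:Y) ry, ∀ v ∈ ball (0:Y) ry, ‖s u - s v‖ ≤ lam * ‖u - v‖)) :
    ∃ rxbar > (0:ℝ), ∃ rA > (0:ℝ), ∃ ra > (0:ℝ), ∃ r0 > (0:ℝ),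
      ∀ A : X →L[ℝ] Y, ‖A - A₀‖ < rA → ∀ a : Y, ‖a - a₀‖ < ra →
        lam * ‖A - A₀‖ < 1 ∧
        ∃ σ : Y → X,
          (∀ y ∈ ball (0:Y) r0,
            ({x : X | y - (A x + a) ∈ G x} ∩ ball xbar rxbar) = {σ y} ∧
              σ y ∈ ball xbar rxbar) ∧
          (∀ y₁ ∈ ball (0:Y) r0, ∀ y₂ ∈ ball (0:Y) r0,
            ‖σ y₁ - σ y₂‖ ≤ lam / (1 - lam * ‖A - A₀‖) * ‖y₁ - y₂‖) := by
  obtain ⟨rx, hrx, ry, hry, s, hs, slip⟩ := hsr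
  have h0ball : (0:Y) ∈ ball (0:Y) ry := by simpa using hry
  have hs0 : s 0 = xbar := by
    have h1 := (hs 0 h0ball).1
    have hx : xbar ∈ ({y : X | (0:Y) - (A₀ y + a₀) ∈ G y} ∩ ball xbar rx) := by
      refine ⟨?_, by simpa using hrx⟩
      simpa [zero_sub] using hsol
    rw [h1] at hx
    exact hx.symm
  obtain ⟨M, hM1, hMb⟩ : ∃ M : ℝ, 1 ≤ M ∧ ‖xbar‖ + rx ≤ M := by
    refine ⟨‖xbar‖ + rx + 1, ?_, by linarith⟩
    have := norm_nonneg xbar; linarith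
  have hMpos : 0 < M := by linarith
  obtain ⟨ε, hεpos, hε1, hε2, hε3⟩ :
      ∃ ε : ℝ, 0 < ε ∧ ε ≤ 1/(2*lam) ∧ ε ≤ ry/(4*M) ∧ ε ≤ rx/(8*lam*M) := by
    refine ⟨min (1/(2*lam)) (min (ry/(4*M)) (rx/(8*lam*M))), ?_, min_le_left _ _,
      le_trans (min_le_right _ _) (min_le_left _ _),
      le_trans (min_le_right _ _) (min_le_right _ _)⟩
    exact lt_min (by positivity) (lt_min (by positivity) (by positivity))
  have hεM2 : ε * M ≤ ry/4 := by
    calc ε * M ≤ (ry/(4*M)) * M := by nlinarith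
    _ = ry/4 := by field_simp
  have hεM3 : lam * (ε * M) ≤ rx/8 := by
    have h := mul_le_mul_of_nonneg_right hε3 hMpos.le
    calc lam * (ε * M) ≤ lam * ((rx/(8*lam*M)) * M) :=
          mul_le_mul_of_nonneg_left h hlam.le
    _ = rx/8 := by field_simp
  have hlamε : lam * ε ≤ 1/2 := by
    have h := mul_le_mul_of_nonneg_left hε1 hlam.le
    calc lam * ε ≤ lam * (1/(2*lam)) := h
    _ = 1/2 := by field_simp
  refine ⟨rx, hrx, ε, hεpos, ε, hεpos, ε, hεpos, ?_⟩
  intro A hA a ha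
  have hAnn : 0 ≤ ‖A - A₀‖ := norm_nonneg _
  have hq : lam * ‖A - A₀‖ < 1/2 := lt_of_lt_of_le (by nlinarith) hlamε
  have hq1 : lam * ‖A - A₀‖ < 1 := by linarith
  refine ⟨hq1, ?_⟩
  -- the auxiliary map
  set z : Y → X → Y := fun y x => y - (A - A₀) x - (a - a₀) with hz
  have hzeq : ∀ (y : Y) (x : X), y - (A x + a) = z y x - (A₀ x + a₀) := by
    intro y x
    simp only [hz, ContinuousLinearMap.sub_apply]
    abel
  have hzbound : ∀ y : Y, ‖y‖ < ε → ∀ x : X, ‖x - xbar‖ ≤ rx → ‖z y x‖ < 3 * (ε * M) := by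
    intro y hy x hx
    have h1 : ‖(A - A₀) x‖ ≤ ‖A - A₀‖ * ‖x‖ := (A - A₀).le_opNorm x
    have h2 : ‖x‖ ≤ rx + ‖xbar‖ := by
      calc ‖x‖ = ‖(x - xbar) + xbar‖ := by rw [sub_add_cancel]
      _ ≤ ‖x - xbar‖ + ‖xbar‖ := norm_add_le _ _
      _ ≤ rx + ‖xbar‖ := by linarith
    have h3 : ‖z y x‖ ≤ ‖y‖ + ‖(A - A₀) x‖ + ‖a - a₀‖ := by
      calc ‖z y x‖ ≤ ‖y - (A - A₀) x‖ + ‖a - a₀‖ := norm_sub_le _ _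
      _ ≤ ‖y‖ + ‖(A - A₀) x‖ + ‖a - a₀‖ := by
          have := norm_sub_le y ((A - A₀) x); linarith
    have h4 : ‖(A - A₀) x‖ ≤ ε * (rx + ‖xbar‖) := by nlinarith [norm_nonneg x]
    have h5 : rx + ‖xbar‖ ≤ M := by linarith
    nlinarith
  have hzry : ∀ y : Y, ‖y‖ < ε → ∀ x : X, ‖x - xbar‖ ≤ rx → z y x ∈ ball (0:Y) ry := by
    intro y hy x hx
    rw [mem_ball, dist_zero_right]
    have := hzbound y hy x hx
    linarith [hεM2]
  -- characterization of solutions in the ball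
  have hchar : ∀ y : Y, ‖y‖ < ε → ∀ x ∈ ball xbar rx,
      (y - (A x + a) ∈ G x ↔ x = s (z y x)) := by
    intro y hy x hx
    have hx' : ‖x - xbar‖ ≤ rx := by
      rw [mem_ball, dist_eq_norm] at hx; linarith
    have hzm := hzry y hy x hx'
    have hE := (hs (z y x) hzm).1
    constructor
    · intro hsolx
      have hmem : x ∈ ({w : X | z y x - (A₀ w + a₀) ∈ G w} ∩ ball xbar rx) := by
        refine ⟨?_, hx⟩
        rw [Set.mem_setOf_eq, ← hzeq]
        exact hsolx
      rw [hE] at hmem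
      exact hmem
    · intro hxs
      have hmem : s (z y x) ∈ ({w : X | z y x - (A₀ w + a₀) ∈ G w} ∩ ball xbar rx) := by
        rw [hE]; rfl
      rw [← hxs] at hmem
      rw [hzeq]
      exact hmem.1
  -- existence of fixed points
  have hex : ∀ y : Y, ‖y‖ < ε → ∃ x : X, ‖x - xbar‖ ≤ rx/2 ∧ s (z y x) = x := by
    intro y hy
    haveI : Nonempty (closedBall xbar (rx/2)) :=
      ⟨⟨xbar, mem_closedBall_self (by linarith)⟩⟩
    haveI : CompleteSpace (closedBall xbar (rx/2)) :=
      IsClosed.completeSpace_coe (hs := isClosed_closedBall)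
    have hself : ∀ x : X, ‖x - xbar‖ ≤ rx/2 → ‖s (z y x) - xbar‖ ≤ rx/2 := by
      intro x hx
      have hx' : ‖x - xbar‖ ≤ rx := by linarith
      have hzm := hzry y hy x hx'
      have h1 := slip (z y x) hzm 0 h0ball
      rw [hs0] at h1
      have hzb := hzbound y hy x hx'
      simp only [sub_zero] at h1
      have h2 := mul_lt_mul_of_pos_left hzb hlam
      linarith
    obtain ⟨F, hFdef⟩ : ∃ F : closedBall xbar (rx/2) → closedBall xbar (rx/2),
        ∀ p, (F p : X) = s (z y p.1) := by
      refine ⟨fun p => ⟨s (z y p.1), ?_⟩, fun p => rfl⟩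
      rw [mem_closedBall, dist_eq_norm]
      exact hself p.1 (by have := p.2; rw [mem_closedBall, dist_eq_norm] at this; exact this)
    have hcontr : ContractingWith (1/2 : NNReal) F := by
      constructor
      · rw [← NNReal.coe_lt_coe]; norm_num
      · apply LipschitzWith.of_dist_le_mul
        intro p q
        have hp : ‖(p:X) - xbar‖ ≤ rx := by
          have := p.2; rw [mem_closedBall, dist_eq_norm] at this; linarith
        have hqb : ‖(q:X) - xbar‖ ≤ rx := by
          have := q.2; rw [mem_closedBall, dist_eq_norm] at this; linarith
        have h1 := slip (z y p.1) (hzry y hy p.1 hp) (z y q.1) (hzry y hy q.1 hqb)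
        have h2 : z y p.1 - z y q.1 = (A - A₀) ((q:X) - p.1) := by
          simp only [hz, map_sub]
          abel
        have h3 : ‖z y p.1 - z y q.1‖ ≤ ‖A - A₀‖ * ‖(p:X) - q.1‖ := by
          rw [h2]
          calc ‖(A - A₀) ((q:X) - p.1)‖ ≤ ‖A - A₀‖ * ‖(q:X) - p.1‖ := (A - A₀).le_opNorm _
          _ = ‖A - A₀‖ * ‖(p:X) - q.1‖ := by rw [norm_sub_rev ((q:X)) (p:X)]
        have hd : dist (F p) (F q) = ‖s (z y p.1) - s (z y q.1)‖ := by
          rw [Subtype.dist_eq, dist_eq_norm, hFdef, hFdef]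
        have hd' : dist p q = ‖(p:X) - q.1‖ := by
          rw [Subtype.dist_eq, dist_eq_norm]
        rw [hd, hd']
        push_cast
        have hdn : (0:ℝ) ≤ ‖(p:X) - q.1‖ := norm_nonneg _
        calc ‖s (z y p.1) - s (z y q.1)‖ ≤ lam * ‖z y p.1 - z y q.1‖ := h1
        _ ≤ lam * (‖A - A₀‖ * ‖(p:X) - q.1‖) := mul_le_mul_of_nonneg_left h3 hlam.le
        _ = (lam * ‖A - A₀‖) * ‖(p:X) - q.1‖ := by ring
        _ ≤ (1/2) * ‖(p:X) - q.1‖ := mul_le_mul_of_nonneg_right hq.le hdn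
    obtain ⟨xf, hxf, -⟩ := hcontr.exists_fixedPoint (Classical.arbitrary _)
      (edist_ne_top _ _)
    refine ⟨xf.1, ?_, ?_⟩
    · have := xf.2; rw [mem_closedBall, dist_eq_norm] at this; exact this
    · have h := congrArg Subtype.val hxf
      rw [hFdef] at h
      exact h
  -- define σ
  classical
  obtain ⟨σ, hσfix⟩ : ∃ σ : Y → X, ∀ y : Y, ‖y‖ < ε →
      ‖σ y - xbar‖ ≤ rx/2 ∧ s (z y (σ y)) = σ y := by
    refine ⟨fun y => if hy : ‖y‖ < ε then (hex y hy).choose else xbar, fun y hy => ?_⟩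
    simp only [dif_pos hy]
    exact (hex y hy).choose_spec
  refine ⟨σ, ?_, ?_⟩
  · intro y hy
    rw [mem_ball, dist_zero_right] at hy
    obtain ⟨hσball, hσf⟩ := hσfix y hy
    have hσmem : σ y ∈ ball xbar rx := by
      rw [mem_ball, dist_eq_norm]; linarith
    have hσsol : y - (A (σ y) + a) ∈ G (σ y) :=
      (hchar y hy (σ y) hσmem).mpr hσf.symm
    constructor
    · ext x
      simp only [Set.mem_inter_iff, Set.mem_setOf_eq, Set.mem_singleton_iff]
      constructor
      · rintro ⟨hxsol, hxball⟩
        have hxf := (hchar y hy x hxball).mp hxsol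
        -- uniqueness via contraction
        have hx' : ‖x - xbar‖ ≤ rx := by
          rw [mem_ball, dist_eq_norm] at hxball; linarith
        have hσ' : ‖σ y - xbar‖ ≤ rx := by linarith
        have h1 := slip (z y x) (hzry y hy x hx') (z y (σ y)) (hzry y hy (σ y) hσ')
        have h2 : z y x - z y (σ y) = (A - A₀) (σ y - x) := by
          simp only [hz, map_sub]; abel
        have h3 : ‖z y x - z y (σ y)‖ ≤ ‖A - A₀‖ * ‖x - σ y‖ := by
          rw [h2]
          calc ‖(A - A₀) (σ y - x)‖ ≤ ‖A - A₀‖ * ‖σ y - x‖ := (A - A₀).le_opNorm _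
          _ = ‖A - A₀‖ * ‖x - σ y‖ := by rw [norm_sub_rev (σ y) x]
        rw [hσf, ← hxf] at h1
        have h4 : ‖x - σ y‖ ≤ lam * (‖A - A₀‖ * ‖x - σ y‖) := by
          calc ‖x - σ y‖ ≤ lam * ‖z y x - z y (σ y)‖ := h1
          _ ≤ lam * (‖A - A₀‖ * ‖x - σ y‖) := mul_le_mul_of_nonneg_left h3 hlam.le
        have hdn : (0:ℝ) ≤ ‖x - σ y‖ := norm_nonneg _
        have h6 : lam * (‖A - A₀‖ * ‖x - σ y‖) ≤ (1/2) * ‖x - σ y‖ := by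
          calc lam * (‖A - A₀‖ * ‖x - σ y‖) = (lam * ‖A - A₀‖) * ‖x - σ y‖ := by ring
          _ ≤ (1/2) * ‖x - σ y‖ := mul_le_mul_of_nonneg_right hq.le hdn
        have h5 : ‖x - σ y‖ ≤ 0 := by linarith
        have : x - σ y = 0 := by
          rw [← norm_le_zero_iff]; exact h5
        exact sub_eq_zero.mp this
      · rintro rfl
        exact ⟨hσsol, hσmem⟩
    · exact hσmem
  · intro y₁ hy₁ y₂ hy₂
    rw [mem_ball, dist_zero_right] at hy₁ hy₂
    obtain ⟨hb₁, hf₁⟩ := hσfix y₁ hy₁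
    obtain ⟨hb₂, hf₂⟩ := hσfix y₂ hy₂
    have hb₁' : ‖σ y₁ - xbar‖ ≤ rx := by linarith
    have hb₂' : ‖σ y₂ - xbar‖ ≤ rx := by linarith
    have h1 := slip (z y₁ (σ y₁)) (hzry y₁ hy₁ _ hb₁') (z y₂ (σ y₂)) (hzry y₂ hy₂ _ hb₂')
    rw [hf₁, hf₂] at h1
    have h2 : z y₁ (σ y₁) - z y₂ (σ y₂) = (y₁ - y₂) - (A - A₀) (σ y₁ - σ y₂) := by
      simp only [hz, map_sub]; abel
    have h3 : ‖z y₁ (σ y₁) - z y₂ (σ y₂)‖ ≤ ‖y₁ - y₂‖ + ‖A - A₀‖ * ‖σ y₁ - σ y₂‖ := by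
      rw [h2]
      calc ‖(y₁ - y₂) - (A - A₀) (σ y₁ - σ y₂)‖
          ≤ ‖y₁ - y₂‖ + ‖(A - A₀) (σ y₁ - σ y₂)‖ := norm_sub_le _ _
      _ ≤ ‖y₁ - y₂‖ + ‖A - A₀‖ * ‖σ y₁ - σ y₂‖ := by
          have := (A - A₀).le_opNorm (σ y₁ - σ y₂); linarith
    have h4 : ‖σ y₁ - σ y₂‖ ≤ lam * ‖y₁ - y₂‖ + lam * ‖A - A₀‖ * ‖σ y₁ - σ y₂‖ := by
      calc ‖σ y₁ - σ y₂‖ ≤ lam * ‖z y₁ (σ y₁) - z y₂ (σ y₂)‖ := h1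
      _ ≤ lam * (‖y₁ - y₂‖ + ‖A - A₀‖ * ‖σ y₁ - σ y₂‖) := mul_le_mul_of_nonneg_left h3 hlam.le
      _ = lam * ‖y₁ - y₂‖ + lam * ‖A - A₀‖ * ‖σ y₁ - σ y₂‖ := by ring
    have hpos : 0 < 1 - lam * ‖A - A₀‖ := by linarith
    rw [div_mul_eq_mul_div, le_div_iff₀ hpos]
    nlinarith [norm_nonneg (σ y₁ - σ y₂), norm_nonneg (y₁ - y₂), h4]
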